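/- For every instance I of the rationing problem and every baseline ordering ≻_π, every matching output by the Reverse Rejecting (RR) rule respects priorities: there are no agents i, j and category c such that the output matches i to c, leaves j unmatched, and j ≻_c i. -/
import Mathlib


open scoped Classical

/-- An instance of the rationing problem: a quota for every category and, for every
category `c`, a priority ranking `≿_c`: a total preorder on `N ∪ {∅}`, where we model
`N ∪ {∅}` as `Option N` with `none` playing the role of `∅`. -/
structure Inst (N C : Type*) where
  quota : C → ℕ
  prio : C → Option N → Option N → Prop
  total : ∀ c x y, prio c x y ∨ prio c y x
  trans : ∀ c x y z, prio c x y → prio c y z → prio c x z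

namespace Inst

variable {N C : Type*}

/-- The strict part `≻_c` of the priority ranking `≿_c`. -/
def Strict (I : Inst N C) (c : C) (x y : Option N) : Prop :=
  I.prio c x y ∧ ¬ I.prio c y x

/-- Agent `i` is eligible for category `c` if `i ≻_c ∅`. -/
def Eligible (I : Inst N C) (i : N) (c : C) : Prop :=
  I.Strict c (some i) none

end Inst

variable {N C : Type*} [Fintype N] [DecidableEq N] [DecidableEq C]

/-- The number of matched agents of (the function) `μ`. -/
def msize (μ : N → Option C) : ℕ :=
  (Finset.univ.filter fun i => μ i ≠ none).card

/-- `μ` satisfies the capacity constraints: every category `c` is matched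
to at most `quota c` agents. -/
def Inst.IsMatching (I : Inst N C) (μ : N → Option C) : Prop :=
  ∀ c, (Finset.univ.filter fun i => μ i = some c).card ≤ I.quota c

/-- A baseline ordering `≻_π`, given as a duplicate-free list of all agents,
listed from highest priority to lowest priority; so `i ≻_π j` iff
`order.indexOf i < order.indexOf j`. -/
def IsBaseline (order : List N) : Prop :=
  order.Nodup ∧ ∀ i : N, i ∈ order

/-- `μ` is a matching of the reduced reservation graph `B_I^{-R}`: it satisfies the
capacity constraints, leaves all agents of `R` unmatched, and uses only edges `{i,c}`
with `i` eligible for `c` and no `j ∈ R` with `j ≻_c i`. -/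
def Inst.MatchingOf (I : Inst N C) (R : Finset N) (μ : N → Option C) : Prop :=
  I.IsMatching μ ∧ (∀ i ∈ R, μ i = none) ∧
    ∀ i c, μ i = some c → I.Eligible i c ∧ ∀ j ∈ R, ¬ I.Strict c (some j) (some i)

/-- `ms(B_I^{-R})`: the size of a maximum size matching of the reduced reservation
graph `B_I^{-R}`. -/
noncomputable def Inst.ms (I : Inst N C) (R : Finset N) : ℕ :=
  sSup {k | ∃ μ : N → Option C, I.MatchingOf R μ ∧ msize μ = k}

/-- The set `R_I` of agents rejected by the Reverse Rejecting (RR) rule: the agents are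
considered in order of the baseline ordering from lowest to highest priority (i.e. from the
end of the list `order` to its front), and agent `i` is added to the current rejected set `R`
iff `ms(B_I^{-(R ∪ {i})}) = ms(B_I)`. -/
noncomputable def Inst.rrReject (I : Inst N C) (order : List N) : Finset N :=
  order.foldr
    (fun i R => if I.ms (insert i R) = I.ms (∅ : Finset N) then insert i R else R) ∅

/-- `μ` is a possible output of the RR rule for baseline ordering `order`:
a maximum size matching of the reduced reservation graph `B_I^{-R_I}`. -/
def Inst.IsRROutcome (I : Inst N C) (order : List N) (μ : N → Option C) : Prop :=
  I.MatchingOf (I.rrReject order) μ ∧ msize μ = I.ms (I.rrReject order)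


namespace RRAux

lemma prio_refl (I : Inst N C) (c : C) (x : Option N) : I.prio c x x :=
  (I.total c x x).elim id id

lemma strict_trans (I : Inst N C) {c : C} {x y z : Option N}
    (h1 : I.Strict c x y) (h2 : I.Strict c y z) : I.Strict c x z :=
  ⟨I.trans c x y z h1.1 h2.1, fun h => h1.2 (I.trans c y z x h2.1 h)⟩

lemma msize_le (μ : N → Option C) : msize μ ≤ Fintype.card N :=
  (Finset.card_filter_le _ _).trans (le_of_eq Finset.card_univ)

lemma matchingOf_none (I : Inst N C) (R : Finset N) :
    I.MatchingOf R (fun _ => none) := by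
  refine ⟨fun c => ?_, fun i _ => rfl, fun i c h => by simp at h⟩
  simp [Inst.IsMatching]

lemma msize_none : msize (fun _ : N => (none : Option C)) = 0 := by
  simp [msize]

lemma ms_bddAbove (I : Inst N C) (R : Finset N) :
    BddAbove {k | ∃ μ : N → Option C, I.MatchingOf R μ ∧ msize μ = k} :=
  ⟨Fintype.card N, fun k hk => by obtain ⟨μ, _, hm⟩ := hk; exact hm ▸ msize_le μ⟩

lemma ms_nonempty (I : Inst N C) (R : Finset N) :
    {k | ∃ μ : N → Option C, I.MatchingOf R μ ∧ msize μ = k}.Nonempty :=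
  ⟨0, fun _ => none, matchingOf_none I R, msize_none⟩

lemma le_ms (I : Inst N C) {R : Finset N} {μ : N → Option C}
    (h : I.MatchingOf R μ) : msize μ ≤ I.ms R :=
  le_csSup (ms_bddAbove I R) ⟨μ, h, rfl⟩

lemma ms_antitone (I : Inst N C) {R1 R2 : Finset N} (h : R1 ⊆ R2) :
    I.ms R2 ≤ I.ms R1 := by
  refine csSup_le_csSup (ms_bddAbove I R1) (ms_nonempty I R2) ?_
  rintro k ⟨μ, ⟨hcap, hun, hedge⟩, hm⟩
  exact ⟨μ, ⟨hcap, fun i hi => hun i (h hi),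
    fun i c hic => ⟨(hedge i c hic).1, fun j hj => (hedge i c hic).2 j (h hj)⟩⟩, hm⟩

/-- The rank of agent `i` in category `c`'s priority order. -/
noncomputable def rankc (I : Inst N C) (c : C) (i : N) : ℕ :=
  (Finset.univ.filter fun x : Option N => I.prio c (some i) x).card

lemma rankc_le (I : Inst N C) (c : C) (i : N) :
    rankc I c i ≤ Fintype.card (Option N) :=
  (Finset.card_filter_le _ _).trans (le_of_eq Finset.card_univ)

lemma rankc_lt (I : Inst N C) {c : C} {j l : N}
    (hs : I.Strict c (some j) (some l)) : rankc I c l < rankc I c j := by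
  apply Finset.card_lt_card
  have hsub : (Finset.univ.filter fun x : Option N => I.prio c (some l) x)
      ⊆ Finset.univ.filter fun x : Option N => I.prio c (some j) x := by
    intro x hx
    simp only [Finset.mem_filter, Finset.mem_univ, true_and] at hx ⊢
    exact I.trans c _ _ _ hs.1 hx
  refine (Finset.ssubset_iff_of_subset hsub).mpr ⟨some j, ?_, ?_⟩
  · simp only [Finset.mem_filter, Finset.mem_univ, true_and]
    exact prio_refl I c (some j)
  · simp only [Finset.mem_filter, Finset.mem_univ, true_and]
    exact hs.2

/-- The potential of a matching: the sum of the ranks of the matched agents. -/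
noncomputable def phi (I : Inst N C) (μ : N → Option C) : ℕ :=
  ∑ i, (μ i).elim 0 (fun c => rankc I c i)

lemma phi_le (I : Inst N C) (μ : N → Option C) :
    phi I μ ≤ Fintype.card N * Fintype.card (Option N) := by
  calc phi I μ ≤ ∑ _i : N, Fintype.card (Option N) := by
        refine Finset.sum_le_sum fun i _ => ?_
        cases h : μ i with
        | none => simp
        | some c => simpa [h] using rankc_le I c i
    _ = Fintype.card N * Fintype.card (Option N) := by
        simp [Finset.sum_const, Finset.card_univ, mul_comm]

lemma sum_split {j l : N} (hjl : j ≠ l) (G : N → ℕ) :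
    ∑ i, G i = (∑ i ∈ Finset.univ \ {j, l}, G i) + (G j + G l) := by
  rw [← Finset.sum_sdiff (Finset.subset_univ ({j, l} : Finset N)),
    Finset.sum_pair hjl]

/-- The swap step: if `j ∉ R` is unmatched and some matched agent `l` is dominated by
`j` at its category, replace `l` by `j` there. -/
lemma swap_lemma (I : Inst N C) (R : Finset N) (μ : N → Option C)
    (hμ : I.MatchingOf R μ) {j l : N} {c' : C} (hjR : j ∉ R) (hj : μ j = none)
    (hl : μ l = some c') (hs : I.Strict c' (some j) (some l)) :
    ∃ μ' : N → Option C, I.MatchingOf R μ' ∧ msize μ' = msize μ ∧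
      phi I μ < phi I μ' ∧ μ' l = none ∧ l ∉ R := by
  obtain ⟨hcap, hun, hedge⟩ := hμ
  have hjl : j ≠ l := by
    rintro rfl; exact hs.2 hs.1
  have hlR : l ∉ R := fun hlR => by simp [hun l hlR] at hl
  set μ' : N → Option C := fun k => if k = j then some c' else if k = l then none else μ k
    with hμ'def
  have hμ'j : μ' j = some c' := by simp [hμ'def]
  have hμ'l : μ' l = none := by simp [hμ'def, hjl.symm]
  have hμ'other : ∀ k, k ≠ j → k ≠ l → μ' k = μ k := fun k h1 h2 => by
    simp [hμ'def, h1, h2]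
  have helig_l := hedge l c' hl
  have helig_j : I.Eligible j c' := strict_trans I hs helig_l.1
  have hnodom_j : ∀ r ∈ R, ¬ I.Strict c' (some r) (some j) := by
    intro r hr hrj
    refine helig_l.2 r hr ⟨I.trans c' _ _ _ hrj.1 hs.1, fun hlr => ?_⟩
    exact hs.2 (I.trans c' _ _ _ hlr hrj.1)
  refine ⟨μ', ⟨?_, ?_, ?_⟩, ?_, ?_, hμ'l, hlR⟩
  · -- capacity
    intro c
    have : (Finset.univ.filter fun i => μ' i = some c).card
        = (Finset.univ.filter fun i => μ i = some c).card := by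
      rw [Finset.card_filter, Finset.card_filter, sum_split hjl, sum_split hjl]
      congr 1
      · refine Finset.sum_congr rfl fun i hi => ?_
        simp only [Finset.mem_sdiff, Finset.mem_insert, Finset.mem_singleton] at hi
        push_neg at hi
        rw [hμ'other i hi.2.1 hi.2.2]
      · rw [hμ'j, hμ'l, hj, hl]
        by_cases hcc : c' = c <;> simp [hcc]
    exact this ▸ hcap c
  · -- R unmatched
    intro i hi
    have hij : i ≠ j := fun h => hjR (h ▸ hi)
    have hil : i ≠ l := fun h => hlR (h ▸ hi)
    rw [hμ'other i hij hil]; exact hun i hi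
  · -- edges
    intro i c hic
    by_cases hij : i = j
    · subst hij
      rw [hμ'j] at hic
      obtain rfl : c' = c := Option.some_injective _ hic
      exact ⟨helig_j, hnodom_j⟩
    · by_cases hil : i = l
      · subst hil; rw [hμ'l] at hic; exact absurd hic (by simp)
      · rw [hμ'other i hij hil] at hic; exact hedge i c hic
  · -- msize
    unfold msize
    rw [Finset.card_filter, Finset.card_filter, sum_split hjl, sum_split hjl]
    congr 1
    · refine Finset.sum_congr rfl fun i hi => ?_
      simp only [Finset.mem_sdiff, Finset.mem_insert, Finset.mem_singleton] at hi
      push_neg at hi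
      rw [hμ'other i hi.2.1 hi.2.2]
    · rw [hμ'j, hμ'l, hj, hl]; simp
  · -- phi increases
    unfold phi
    rw [sum_split hjl, sum_split hjl]
    have hoff : (∑ i ∈ Finset.univ \ {j, l}, (μ' i).elim 0 (fun c => rankc I c i))
        = ∑ i ∈ Finset.univ \ {j, l}, (μ i).elim 0 (fun c => rankc I c i) := by
      refine Finset.sum_congr rfl fun i hi => ?_
      simp only [Finset.mem_sdiff, Finset.mem_insert, Finset.mem_singleton] at hi
      push_neg at hi
      rw [hμ'other i hi.2.1 hi.2.2]
    rw [hoff, hμ'j, hμ'l, hj, hl]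
    simp only [Option.elim_none, Option.elim_some]
    have := rankc_lt I hs
    omega

lemma find_swap (I : Inst N C) {R : Finset N} {μ : N → Option C} {j : N}
    (hμ : I.MatchingOf R μ) (hsz : msize μ = I.ms R)
    (hP : I.ms (insert j R) < I.ms R) (hjR : j ∉ R) (hj : μ j = none) :
    ∃ l c', μ l = some c' ∧ I.Strict c' (some j) (some l) := by
  by_contra hcon
  push_neg at hcon
  obtain ⟨hcap, hun, hedge⟩ := hμ
  have hmem : I.MatchingOf (insert j R) μ := by
    refine ⟨hcap, fun i hi => ?_, fun i c hic => ⟨(hedge i c hic).1, fun r hr => ?_⟩⟩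
    · rcases Finset.mem_insert.mp hi with rfl | hi
      · exact hj
      · exact hun i hi
    · rcases Finset.mem_insert.mp hr with rfl | hr
      · exact hcon i c hic
      · exact (hedge i c hic).2 r hr
  have := le_ms I hmem
  omega

lemma key (I : Inst N C) {R : Finset N}
    (hP : ∀ k ∉ R, I.ms (insert k R) < I.ms R) :
    ∀ (n : ℕ) (μ : N → Option C), I.MatchingOf R μ → msize μ = I.ms R →
      Fintype.card N * Fintype.card (Option N) ≤ phi I μ + n →
      ∀ j ∉ R, μ j ≠ none := by
  intro n
  induction n with
  | zero =>
    intro μ hμ hsz hbound j hjR hj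
    obtain ⟨l, c', hl, hs⟩ := find_swap I hμ hsz (hP j hjR) hjR hj
    obtain ⟨μ', _, _, hphi, _, _⟩ := swap_lemma I R μ hμ hjR hj hl hs
    have := phi_le I μ'
    omega
  | succ n ih =>
    intro μ hμ hsz hbound j hjR hj
    obtain ⟨l, c', hl, hs⟩ := find_swap I hμ hsz (hP j hjR) hjR hj
    obtain ⟨μ', hμ', hsz', hphi, hl', hlR⟩ := swap_lemma I R μ hμ hjR hj hl hs
    exact ih μ' hμ' (hsz' ▸ hsz) (by omega) l hlR hl'

/-- The one-step function of the RR rule. -/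
noncomputable def step (I : Inst N C) : N → Finset N → Finset N := fun i R =>
  if I.ms (insert i R) = I.ms (∅ : Finset N) then insert i R else R

lemma rr_eq (I : Inst N C) (order : List N) :
    I.rrReject order = List.foldr (step I) ∅ order := rfl

lemma step_subset (I : Inst N C) (i : N) (R : Finset N) : R ⊆ step I i R := by
  unfold step
  split_ifs
  · exact Finset.subset_insert _ _
  · exact subset_rfl

lemma foldr_ms (I : Inst N C) (l : List N) :
    I.ms (List.foldr (step I) ∅ l) = I.ms (∅ : Finset N) := by
  induction l with
  | nil => rfl
  | cons i t ih =>
    rw [List.foldr_cons]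
    unfold step
    split_ifs with h
    · exact h
    · exact ih

lemma foldr_reject (I : Inst N C) (l : List N) {j : N} (hjl : j ∈ l)
    (hjR : j ∉ List.foldr (step I) ∅ l) :
    I.ms (insert j (List.foldr (step I) ∅ l)) < I.ms (∅ : Finset N) := by
  induction l with
  | nil => simp at hjl
  | cons i t ih =>
    rw [List.foldr_cons] at hjR ⊢
    by_cases hc : I.ms (insert i (List.foldr (step I) ∅ t)) = I.ms (∅ : Finset N)
    · rw [show step I i (List.foldr (step I) ∅ t)
          = insert i (List.foldr (step I) ∅ t) from if_pos hc] at hjR ⊢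
      have hji : j ≠ i := fun h => hjR (h ▸ Finset.mem_insert_self _ _)
      have hjt : j ∈ t := by
        rcases List.mem_cons.mp hjl with h | h
        · exact absurd h hji
        · exact h
      have hjRt : j ∉ List.foldr (step I) ∅ t := fun h =>
        hjR (Finset.mem_insert_of_mem h)
      calc I.ms (insert j (insert i (List.foldr (step I) ∅ t)))
          ≤ I.ms (insert j (List.foldr (step I) ∅ t)) :=
            ms_antitone I (Finset.insert_subset_insert _
              (Finset.subset_insert _ _))
        _ < I.ms (∅ : Finset N) := ih hjt hjRt
    · rw [show step I i (List.foldr (step I) ∅ t)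
          = List.foldr (step I) ∅ t from if_neg hc] at hjR ⊢
      by_cases hji : j = i
      · subst hji
        exact lt_of_le_of_ne (ms_antitone I (Finset.empty_subset _)) hc
      · have hjt : j ∈ t := by
          rcases List.mem_cons.mp hjl with h | h
          · exact absurd h hji
          · exact h
        exact ih hjt hjR

end RRAux

/-- Every matching output by the RR rule respects priorities: there are no
agents `i, j` and category `c` with `μ i = c`, `μ j = ∅`, and `j ≻_c i`. -/
theorem rr_respects_priorities (I : Inst N C) (order : List N)
    (hb : IsBaseline order) (μ : N → Option C) (hμ : I.IsRROutcome order μ) :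
    ¬ ∃ (i j : N) (c : C), μ i = some c ∧ μ j = none ∧ I.Strict c (some j) (some i) := by
  rintro ⟨i, j, c, hi, hj, hs⟩
  obtain ⟨⟨hcap, hRun, hedge⟩, hsz⟩ := hμ
  by_cases hjR : j ∈ I.rrReject order
  · exact (hedge i c hi).2 j hjR hs
  · have hms : I.ms (I.rrReject order) = I.ms (∅ : Finset N) := by
      rw [RRAux.rr_eq]; exact RRAux.foldr_ms I order
    have hP : ∀ k ∉ I.rrReject order,
        I.ms (insert k (I.rrReject order)) < I.ms (I.rrReject order) := by
      intro k hk
      rw [hms, RRAux.rr_eq] at *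
      exact RRAux.foldr_reject I order (hb.2 k) hk
    exact RRAux.key I hP (Fintype.card N * Fintype.card (Option N)) μ
      ⟨hcap, hRun, hedge⟩ hsz (Nat.le_add_left _ _) j hjR hj
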